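/- Let P₁, Q be reals with P₁ > 0, Q ≥ 0, and let α be a real number such that P₀' := P₀ − (α−1)²·Q > 0. Then g(α, α−1, P₁) ≤ f(α, α−1, P₁) if and only if P₀'² ≥ α²·Q·(P₁ + 1 − P₀'). -/

import Mathlib

/-- The rate function `f` from the Gaussian inner bound (Proposition 2.2.3). -/
noncomputable def f (P₀ Q α β P : ℝ) : ℝ :=
  (1/2) * Real.log ((P₀ - β^2*Q) * ((P₀ - β^2*Q) + (1+β)^2*Q + P + 1) /
    ((P₀ - β^2*Q) * Q * (α - 1 - β)^2 + (P₀ - β^2*Q) + α^2*Q))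

/-- The rate function `g` from the Gaussian inner bound (Proposition 2.2.3). -/
noncomputable def g (P₀ Q α β P : ℝ) : ℝ :=
  (1/2) * Real.log (1 + P * ((P₀ - β^2*Q) + α^2*Q) /
    ((P₀ - β^2*Q) * Q * (α - 1 - β)^2 + (P₀ - β^2*Q) + α^2*Q))

/-- with `β = α - 1` and `P₀' := P₀ - (α-1)²·Q > 0`,
`g(α, α−1, P₁) ≤ f(α, α−1, P₁)` iff `P₀'² ≥ α²·Q·(P₁ + 1 − P₀')`. -/
theorem stmt_3 (P₁ Q P₀ α : ℝ) (hP₁ : 0 < P₁) (hQ : 0 ≤ Q)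
    (hP₀' : 0 < P₀ - (α - 1)^2*Q) :
    g P₀ Q α (α - 1) P₁ ≤ f P₀ Q α (α - 1) P₁ ↔
      (P₀ - (α - 1)^2*Q)^2 ≥ α^2*Q*(P₁ + 1 - (P₀ - (α - 1)^2*Q)) := by
  unfold f g
  set P' := P₀ - (α - 1)^2*Q with hP'def
  have hD : 0 < P' + α^2*Q := by nlinarith [sq_nonneg α, mul_nonneg (sq_nonneg α) hQ]
  have e1 : P' * Q * (α - 1 - (α - 1))^2 + P' + α^2*Q = P' + α^2*Q := by ring
  rw [e1, mul_div_assoc, div_self hD.ne', mul_one]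
  have hg : (0:ℝ) < 1 + P₁ := by linarith
  have hf : 0 < P' * (P' + (1+(α-1))^2*Q + P₁ + 1) / (P' + α^2*Q) := by
    apply div_pos _ hD
    have : 0 < P' + (1+(α-1))^2*Q + P₁ + 1 := by nlinarith [mul_nonneg (sq_nonneg (1+(α-1))) hQ]
    exact mul_pos hP₀' this
  rw [mul_le_mul_iff_of_pos_left (by norm_num : (0:ℝ) < 1/2), Real.log_le_log_iff hg hf,
    le_div_iff₀ hD]
  constructor <;> intro h <;> nlinarith [h]
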